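/- For integers m, n ≥ 2 and any integer s ≥ 2n + 2, there exist a smooth hypersurface Y ⊂ P^s of degree m and an (n+1)-dimensional linear subspace M ⊂ P^s such that the scheme-theoretic intersection Y ∩ M equals X_n[m], the m-fold hyperplane mH_n inside M. Explicitly, with coordinates [x_0 : ⋯ : x_s], the hypersurface Y = V(x_0^m + Σ_{k=1}^{n+1} x_k^{m−1} x_{k+n+1} + Σ_{i ≥ n+2} x_i^m) is smooth and satisfies Y ∩ {x_{n+2} = ⋯ = x_s = 0} = X_n[m]. -/

import Mathlib

open MvPolynomial

lemma evalA {k : Type*} [CommRing k] {N : ℕ} (x : Fin N → k) (j i : Fin N) (m : ℕ) :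
    eval x (pderiv j ((X i : MvPolynomial (Fin N) k) ^ m))
      = if j = i then (m : k) * x i ^ (m - 1) else 0 := by
  rw [pderiv_pow, pderiv_X]
  by_cases h : j = i
  · subst h; simp [Pi.single_eq_same]
  · simp [Pi.single_eq_of_ne' h, h]

lemma evalB {k : Type*} [CommRing k] {N : ℕ} (x : Fin N → k) (j a b : Fin N) (p : ℕ) :
    eval x (pderiv j ((X a : MvPolynomial (Fin N) k) ^ p * X b))
      = (if j = a then (p : k) * x a ^ (p - 1) * x b else 0)
        + (if j = b then x a ^ p else 0) := by
  rw [pderiv_mul, pderiv_pow, pderiv_X, pderiv_X]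
  by_cases h1 : j = a <;> by_cases h2 : j = b
  · subst h1; subst h2; simp [Pi.single_eq_same]
  · subst h1; simp [Pi.single_eq_same, Pi.single_eq_of_ne' h2, h2, mul_assoc]
  · subst h2; simp [Pi.single_eq_same, Pi.single_eq_of_ne' h1, h1]
  · simp [Pi.single_eq_of_ne' h1, Pi.single_eq_of_ne' h2, h1, h2]

/-- **Lemma (paper, Lemma 3.1).** For integers `m, n ≥ 2` and any `s ≥ 2n + 2`,
there exist a smooth hypersurface `Y ⊂ ℙ^s` of degree `m` and an
`(n+1)`-dimensional linear subspace `M ⊂ ℙ^s` such that the scheme-theoretic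
intersection `Y ∩ M` equals `Xₙ[m]`, the `m`-fold hyperplane `m·Hₙ` inside `M`.

Explicitly, in coordinates `[x₀ : ⋯ : x_s]` one may take
`Y = V(x₀^m + ∑_{k=1}^{n+1} x_k^{m−1} x_{k+n+1} + ∑_{i ≥ n+2} x_i^m)` and
`M = {x_{n+2} = ⋯ = x_s = 0}`. Formally: there is a homogeneous polynomial `f`
of degree `m` in `s + 1` variables such that
* `Y = V(f)` is smooth (by the Jacobian criterion, valid in characteristic
  zero: the partial derivatives of `f` have no common zero except the origin),
* substituting `xᵢ = 0` for all `i ≥ n + 2` turns `f` into `x₀^m`, i.e.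
  `Y ∩ M` is the `m`-fold hyperplane `{x₀ = 0}` with multiplicity `m` in `M`. -/
theorem smooth_hypersurface_meeting_linear_space_in_thick_hyperplane
    (k : Type*) [Field k] [IsAlgClosed k] [CharZero k]
    (m n s : ℕ) (hm : 2 ≤ m) (hn : 2 ≤ n) (hs : 2 * n + 2 ≤ s) :
    ∃ f : MvPolynomial (Fin (s + 1)) k,
      f.IsHomogeneous m ∧
      (∀ x : Fin (s + 1) → k, x ≠ 0 → ∃ i, eval x (pderiv i f) ≠ 0) ∧
      aeval (fun i : Fin (s + 1) =>
          if (i : ℕ) ≤ n + 1 then (X i : MvPolynomial (Fin (s + 1)) k) else 0) f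
        = X (0 : Fin (s + 1)) ^ m := by
  classical
  set A : Finset (Fin (s+1)) :=
    Finset.univ.filter (fun i => 1 ≤ (i : ℕ) ∧ (i : ℕ) ≤ n + 1) with hA
  set B : Finset (Fin (s+1)) :=
    Finset.univ.filter (fun i => n + 2 ≤ (i : ℕ)) with hB
  set b : Fin (s+1) → Fin (s+1) :=
    fun i => ⟨min ((i:ℕ) + n + 1) s, by omega⟩ with hb
  set c : Fin (s+1) → Fin (s+1) :=
    fun j => ⟨(j:ℕ) - (n+1), by have := j.2; omega⟩ with hc
  have hbv : ∀ i : Fin (s+1), (i:ℕ) ≤ n + 1 → ((b i : Fin (s+1)) : ℕ) = (i:ℕ) + n + 1 := by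
    intro i hi; simp only [hb]; omega
  refine ⟨X 0 ^ m + (∑ i ∈ A, X i ^ (m-1) * X (b i)) + ∑ i ∈ B, X i ^ m, ?_, ?_, ?_⟩
  · -- homogeneous
    have h1 : ((X (0 : Fin (s+1)) : MvPolynomial (Fin (s+1)) k) ^ m).IsHomogeneous m := by
      simpa using (isHomogeneous_X k (0 : Fin (s+1))).pow m
    refine (h1.add (IsHomogeneous.sum _ _ _ ?_)).add (IsHomogeneous.sum _ _ _ ?_)
    · intro i _
      have h2 := ((isHomogeneous_X k i).pow (m-1)).mul (isHomogeneous_X k (b i))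
      simpa [show m - 1 + 1 = m from by omega] using h2
    · intro i _
      simpa using (isHomogeneous_X k i).pow m
  · -- smoothness: no common zero of partials except origin
    intro x hx
    by_contra hcon
    push_neg at hcon
    -- closed form of each partial evaluated at x
    have hE : ∀ j : Fin (s+1), eval x (pderiv j
        (X 0 ^ m + (∑ i ∈ A, X i ^ (m-1) * X (b i)) + ∑ i ∈ B, X i ^ m)) =
        (if j = (0 : Fin (s+1)) then (m : k) * x 0 ^ (m-1) else 0)
        + (if 1 ≤ (j:ℕ) ∧ (j:ℕ) ≤ n + 1 then ((m-1 : ℕ) : k) * x j ^ (m-2) * x (b j) else 0)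
        + (if n + 2 ≤ (j:ℕ) ∧ (j:ℕ) ≤ 2*n + 2 then x (c j) ^ (m-1) else 0)
        + (if n + 2 ≤ (j:ℕ) then (m : k) * x j ^ (m-1) else 0) := by
      intro j
      rw [map_add, map_add, map_add, map_add, map_sum, map_sum, map_sum, map_sum]
      have t1 : eval x (pderiv j ((X (0:Fin (s+1)) : MvPolynomial (Fin (s+1)) k) ^ m))
          = if j = (0 : Fin (s+1)) then (m : k) * x 0 ^ (m-1) else 0 :=
        evalA x j 0 m
      have t2 : (∑ i ∈ A, eval x (pderiv j ((X i : MvPolynomial (Fin (s+1)) k) ^ (m-1) * X (b i))))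
          = (if 1 ≤ (j:ℕ) ∧ (j:ℕ) ≤ n + 1 then ((m-1:ℕ):k) * x j ^ (m-2) * x (b j) else 0)
            + (if n + 2 ≤ (j:ℕ) ∧ (j:ℕ) ≤ 2*n + 2 then x (c j) ^ (m-1) else 0) := by
        have expand : ∀ i ∈ A, eval x (pderiv j ((X i : MvPolynomial (Fin (s+1)) k) ^ (m-1) * X (b i)))
            = (if j = i then ((m-1:ℕ):k) * x i ^ (m-2) * x (b i) else 0)
              + (if j = b i then x i ^ (m-1) else 0) := by
          intro i _
          simp only [evalB, show m - 1 - 1 = m - 2 from by omega]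
        rw [Finset.sum_congr rfl expand, Finset.sum_add_distrib]
        congr 1
        · rw [Finset.sum_ite_eq]
          by_cases h : 1 ≤ (j:ℕ) ∧ (j:ℕ) ≤ n + 1
          · rw [if_pos, if_pos h]; simp [hA, h.1, h.2]
          · rw [if_neg, if_neg h]; simp [hA]; omega
        · by_cases h : n + 2 ≤ (j:ℕ) ∧ (j:ℕ) ≤ 2*n + 2
          · rw [if_pos h, Finset.sum_eq_single (c j)]
            · rw [if_pos]
              apply Fin.ext
              rw [hbv (c j) (by simp [hc]; omega)]
              simp [hc]; omega
            · intro i hiA hne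
              rw [if_neg]
              intro hjb
              apply hne
              simp only [hA, Finset.mem_filter] at hiA
              apply Fin.ext
              have := hbv i hiA.2.2
              have : (j:ℕ) = (i:ℕ) + n + 1 := by rw [hjb]; exact this
              simp [hc]; omega
            · intro hno
              exfalso; apply hno
              simp [hA, hc]; omega
          · rw [if_neg h, Finset.sum_eq_zero]
            intro i hiA
            rw [if_neg]
            intro hjb
            simp only [hA, Finset.mem_filter] at hiA
            have h2 := hbv i hiA.2.2
            have : (j:ℕ) = (i:ℕ) + n + 1 := by rw [hjb]; exact h2
            omega
      have t3 : (∑ i ∈ B, eval x (pderiv j ((X i : MvPolynomial (Fin (s+1)) k) ^ m)))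
          = if n + 2 ≤ (j:ℕ) then (m : k) * x j ^ (m-1) else 0 := by
        rw [Finset.sum_congr rfl (fun i _ => evalA x j i m), Finset.sum_ite_eq]
        by_cases h : n + 2 ≤ (j:ℕ)
        · rw [if_pos, if_pos h]; simp [hB, h]
        · rw [if_neg, if_neg h]; simp [hB]; omega
      rw [t1, t2, t3]; ring
    have hmk : (m : k) ≠ 0 := Nat.cast_ne_zero.mpr (by omega)
    have hm1k : ((m - 1 : ℕ) : k) ≠ 0 := Nat.cast_ne_zero.mpr (by omega)
    -- from each partial vanishing, deduce coordinates vanish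
    apply hx
    funext i
    show x i = 0
    -- helper: coordinates ≥ n+2, ≤ 2n+2 relation
    have key : ∀ j : Fin (s+1), n + 2 ≤ (j:ℕ) → (j:ℕ) ≤ 2*n+2 →
        x (c j) ^ (m-1) + (m : k) * x j ^ (m-1) = 0 := by
      intro j h1 h2
      have := hE j
      rw [hcon j] at this
      rw [if_neg (by intro h; apply absurd (congrArg Fin.val h); simp only [Fin.val_zero]; omega),
          if_neg (by omega), if_pos ⟨h1, h2⟩, if_pos h1] at this
      simpa using this.symm
    have cross : ∀ j : Fin (s+1), 1 ≤ (j:ℕ) → (j:ℕ) ≤ n + 1 →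
        x j = 0 ∨ x (b j) = 0 := by
      intro j h1 h2
      have := hE j
      rw [hcon j] at this
      rw [if_neg (by intro h; apply absurd (congrArg Fin.val h); simp only [Fin.val_zero]; omega),
          if_pos ⟨h1, h2⟩, if_neg (by omega), if_neg (by omega)] at this
      have h0 : ((m-1:ℕ):k) * x j ^ (m-2) * x (b j) = 0 := by simpa using this.symm
      rcases mul_eq_zero.mp h0 with h | h
      · rcases mul_eq_zero.mp h with h | h
        · exact absurd h hm1k
        · by_cases hm2 : m = 2
          · exfalso; rw [hm2] at h; simp at h
          · left; exact pow_eq_zero_iff (by omega : m - 2 ≠ 0) |>.mp h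
      · right; exact h
    have x0 : x 0 = 0 := by
      have := hE 0
      rw [hcon 0] at this
      rw [if_pos rfl, if_neg (by simp), if_neg (by simp), if_neg (by simp)] at this
      have : (m:k) * x 0 ^ (m-1) = 0 := by simpa using this.symm
      rcases mul_eq_zero.mp this with h | h
      · exact absurd h hmk
      · exact pow_eq_zero_iff (by omega : m - 1 ≠ 0) |>.mp h
    have big : ∀ j : Fin (s+1), 2*n + 3 ≤ (j:ℕ) → x j = 0 := by
      intro j hj
      have := hE j
      rw [hcon j] at this
      rw [if_neg (by intro h; apply absurd (congrArg Fin.val h); simp only [Fin.val_zero]; omega),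
          if_neg (by omega), if_neg (by omega), if_pos (by omega)] at this
      have : (m:k) * x j ^ (m-1) = 0 := by simpa using this.symm
      rcases mul_eq_zero.mp this with h | h
      · exact absurd h hmk
      · exact pow_eq_zero_iff (by omega : m - 1 ≠ 0) |>.mp h
    -- now case on i
    rcases Nat.lt_or_ge (i:ℕ) 1 with h | h
    · have : i = 0 := Fin.ext (by simp only [Fin.val_zero]; omega)
      rw [this]; exact x0
    rcases Nat.lt_or_ge (i:ℕ) (n+2) with h2 | h2
    · -- 1 ≤ i ≤ n+1
      have hi2 : (i:ℕ) ≤ n + 1 := by omega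
      rcases cross i h hi2 with hz | hz
      · exact hz
      · -- x (b i) = 0; use key at b i
        have hbi : ((b i):ℕ) = (i:ℕ) + n + 1 := hbv i hi2
        have hk := key (b i) (by omega) (by omega)
        have hcbi : c (b i) = i := Fin.ext (by simp [hc, hbi])
        rw [hcbi, hz, zero_pow (by omega : m - 1 ≠ 0), mul_zero, add_zero] at hk
        exact pow_eq_zero_iff (by omega : m - 1 ≠ 0) |>.mp hk
    rcases Nat.lt_or_ge (i:ℕ) (2*n+3) with h3 | h3
    · -- n+2 ≤ i ≤ 2n+2
      have hci : ((c i):ℕ) = (i:ℕ) - (n+1) := by simp [hc]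
      have hk := key i h2 (by omega)
      have hbci : b (c i) = i := Fin.ext (by rw [hbv (c i) (by omega)]; omega)
      rcases cross (c i) (by omega) (by omega) with hz | hz
      · rw [hz, zero_pow (by omega : m - 1 ≠ 0), zero_add] at hk
        have : (m:k) * x i ^ (m-1) = 0 := hk
        rcases mul_eq_zero.mp this with hh | hh
        · exact absurd hh hmk
        · exact pow_eq_zero_iff (by omega : m - 1 ≠ 0) |>.mp hh
      · rw [hbci] at hz; exact hz
    · exact big i h3
  · -- aeval substitution gives X 0 ^ m
    set φ : Fin (s+1) → MvPolynomial (Fin (s+1)) k :=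
      fun i => if (i:ℕ) ≤ n + 1 then X i else 0 with hφ
    rw [map_add, map_add, map_sum, map_sum]
    have e1 : aeval φ ((X (0:Fin (s+1)) : MvPolynomial (Fin (s+1)) k) ^ m)
        = X (0:Fin (s+1)) ^ m := by
      simp [hφ]
    have e2 : (∑ i ∈ A, aeval φ ((X i : MvPolynomial (Fin (s+1)) k) ^ (m-1) * X (b i))) = 0 := by
      apply Finset.sum_eq_zero
      intro i hiA
      simp only [hA, Finset.mem_filter] at hiA
      have hv : ((b i):ℕ) = (i:ℕ) + n + 1 := hbv i hiA.2.2
      have hz0 : φ (b i) = 0 := by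
        show (if ((b i : Fin (s+1)) : ℕ) ≤ n + 1 then (X (b i) : MvPolynomial (Fin (s+1)) k)
          else 0) = 0
        exact if_neg (by omega)
      simp only [map_mul, map_pow, aeval_X, hz0, mul_zero]
    have e3 : (∑ i ∈ B, aeval φ ((X i : MvPolynomial (Fin (s+1)) k) ^ m)) = 0 := by
      apply Finset.sum_eq_zero
      intro i hiB
      simp only [hB, Finset.mem_filter] at hiB
      have hz0 : φ i = 0 := by
        show (if ((i : Fin (s+1)) : ℕ) ≤ n + 1 then (X i : MvPolynomial (Fin (s+1)) k)
          else 0) = 0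
        exact if_neg (by omega)
      simp only [map_pow, aeval_X, hz0]
      exact zero_pow (by omega)
    rw [e1, e2, e3]; ring
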